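/- The interleaved sequence of ratios a_{2k}/a_{2k-1}, a'_{2k+1}/a'_{2k} is strictly decreasing (a_2/a_1 > a'_3/a'_2 > a_4/a_3 > a'_5/a'_4 > ⋯) and converges to α = (c₁c₂ + √(c₁²c₂² - 4c₁c₂))/(2c₂). -/

import Mathlib

def cheb (X : ℤ) : ℕ → ℤ
  | 0 => 0
  | 1 => 1
  | (n+2) => X * cheb X (n+1) - cheb X n

def seqA (c X : ℤ) (l : ℕ) : ℤ :=
  if l % 2 = 0 then c * cheb X (l / 2) else cheb X (l / 2 + 1) + cheb X (l / 2)

theorem cheb_rec (X : ℤ) (n : ℕ) : cheb X (n+2) = X * cheb X (n+1) - cheb X n := rfl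

theorem cheb_inv (X : ℤ) : ∀ m : ℕ,
    (cheb X (m+1))^2 - X * cheb X (m+1) * cheb X m + (cheb X m)^2 = 1
  | 0 => by simp [cheb]
  | (m+1) => by
      have ih := cheb_inv X m
      rw [cheb_rec]
      linear_combination ih

theorem cheb_ge (X : ℤ) (hX : 2 ≤ X) : ∀ m : ℕ,
    (m : ℤ) ≤ cheb X m ∧ cheb X m + 1 ≤ cheb X (m+1)
  | 0 => by simp [cheb]
  | (m+1) => by
      obtain ⟨h1, h2⟩ := cheb_ge X hX m
      have hm : (0:ℤ) ≤ (m:ℤ) := Int.natCast_nonneg m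
      refine ⟨by push_cast; linarith, ?_⟩
      rw [cheb_rec]
      nlinarith [mul_nonneg (by linarith : (0:ℤ) ≤ X - 2) (by linarith : (0:ℤ) ≤ cheb X (m+1))]

theorem seqA_even (c X : ℤ) (k : ℕ) : seqA c X (2*k) = c * cheb X k := by
  have h1 : (2*k) % 2 = 0 := by omega
  have h2 : (2*k) / 2 = k := by omega
  simp [seqA, h1, h2]

theorem seqA_odd (c X : ℤ) (k : ℕ) : seqA c X (2*k+1) = cheb X (k+1) + cheb X k := by
  have h1 : (2*k+1) % 2 = 1 := by omega
  have h2 : (2*k+1) / 2 = k := by omega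
  simp [seqA, h1, h2]

set_option maxHeartbeats 2000000 in
/-- The interleaved ratio sequence `a_2/a_1 > a'_3/a'_2 > a_4/a_3 > a'_5/a'_4 > ⋯`
is strictly decreasing and converges to `α = (c₁c₂ + √(c₁²c₂² - 4c₁c₂))/(2c₂)`.
Here the `n`-th term (n ≥ 1) is `a_{n+1}/a_n` if `n` is odd and `a'_{n+1}/a'_n` if `n` is even. -/
theorem interleaved_ratios_decreasing_tendsto (c₁ c₂ : ℤ) (h₁ : 0 < c₁) (h₂ : 0 < c₂)
    (h4 : 4 ≤ c₁ * c₂) :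
    let a : ℕ → ℤ := seqA c₁ (c₁ * c₂ - 2)
    let a' : ℕ → ℤ := seqA c₂ (c₁ * c₂ - 2)
    let r : ℕ → ℝ := fun n =>
      if n % 2 = 1 then (a (n + 1) : ℝ) / (a n : ℝ) else (a' (n + 1) : ℝ) / (a' n : ℝ)
    (∀ n : ℕ, 1 ≤ n → r (n + 1) < r n) ∧
      Filter.Tendsto r Filter.atTop
        (nhds (((c₁ : ℝ) * c₂ + Real.sqrt ((c₁ : ℝ) ^ 2 * (c₂ : ℝ) ^ 2 - 4 * ((c₁ : ℝ) * c₂)))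
          / (2 * (c₂ : ℝ)))) := by
  intro a a' r
  set α : ℝ := ((c₁ : ℝ) * c₂ + Real.sqrt ((c₁ : ℝ) ^ 2 * (c₂ : ℝ) ^ 2 - 4 * ((c₁ : ℝ) * c₂)))
      / (2 * (c₂ : ℝ)) with hαdef
  set X : ℤ := c₁ * c₂ - 2 with hXdef
  have hX : 2 ≤ X := by omega
  have hcc : c₁ * c₂ = X + 2 := by omega
  have ha : a = seqA c₁ X := rfl
  have ha' : a' = seqA c₂ X := rfl
  have hr : ∀ n, r n = if n % 2 = 1 then ((a (n+1) : ℤ) : ℝ) / ((a n : ℤ) : ℝ)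
      else ((a' (n+1) : ℤ) : ℝ) / ((a' n : ℤ) : ℝ) := fun _ => rfl
  have hq := cheb_ge X hX
  have hqpos : ∀ k : ℕ, 1 ≤ k → (0:ℤ) < cheb X k := by
    intro k hk
    have h1 := (hq k).1
    have : (1:ℤ) ≤ (k:ℤ) := by exact_mod_cast hk
    linarith
  have hqpos0 : ∀ k : ℕ, (0:ℤ) ≤ cheb X k := by
    intro k
    have h1 := (hq k).1
    have : (0:ℤ) ≤ (k:ℤ) := Int.natCast_nonneg k
    linarith
  -- formulas for r
  have hr2k : ∀ k : ℕ, r (2*k) =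
      (((cheb X (k+1) : ℤ) : ℝ) + ((cheb X k : ℤ) : ℝ)) / ((c₂ : ℝ) * ((cheb X k : ℤ) : ℝ)) := by
    intro k
    rw [hr, if_neg (by omega), ha']
    rw [show 2*k+1 = 2*k+1 from rfl, seqA_odd, seqA_even]
    push_cast
    ring
  have hr2k1 : ∀ k : ℕ, r (2*k+1) =
      (c₁ : ℝ) * ((cheb X (k+1) : ℤ) : ℝ) / (((cheb X (k+1) : ℤ) : ℝ) + ((cheb X k : ℤ) : ℝ)) := by
    intro k
    rw [hr, if_pos (by omega), ha]
    rw [show 2*k+1+1 = 2*(k+1) from by ring, seqA_even, seqA_odd]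
    push_cast
    ring
  -- positivity in ℝ
  have hQpos : ∀ k : ℕ, 1 ≤ k → (0:ℝ) < ((cheb X k : ℤ) : ℝ) := by
    intro k hk; exact_mod_cast hqpos k hk
  have hQ0 : ∀ k : ℕ, (0:ℝ) ≤ ((cheb X k : ℤ) : ℝ) := by
    intro k; exact_mod_cast hqpos0 k
  have hc2R : (0:ℝ) < (c₂ : ℝ) := by exact_mod_cast h₂
  have hc1R : (0:ℝ) < (c₁ : ℝ) := by exact_mod_cast h₁
  -- monotonicity
  have mono : ∀ n : ℕ, 1 ≤ n → r (n + 1) < r n := by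
    intro n hn
    rcases Nat.even_or_odd n with ⟨k, hk⟩ | ⟨k, hk⟩
    · -- n = 2k, k ≥ 1 : r(2k+1) < r(2k)
      have hk' : n = 2*k := by omega
      have hk1 : 1 ≤ k := by omega
      subst hk'
      rw [show 2*k+1 = 2*k+1 from rfl, hr2k1 k, hr2k k]
      have hd1 : (0:ℝ) < ((cheb X (k+1) : ℤ) : ℝ) + ((cheb X k : ℤ) : ℝ) :=
        add_pos (hQpos (k+1) (by omega)) (hQpos k hk1)
      have hd2 : (0:ℝ) < (c₂:ℝ) * ((cheb X k : ℤ) : ℝ) := mul_pos hc2R (hQpos k hk1)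
      rw [div_lt_div_iff₀ hd1 hd2]
      have key : c₁ * cheb X (k+1) * (c₂ * cheb X k)
          < (cheb X (k+1) + cheb X k) * (cheb X (k+1) + cheb X k) := by
        nlinarith [cheb_inv X k, hcc]
      exact_mod_cast key
    · -- n = 2k+1 : r(2k+2) < r(2k+1)
      subst hk
      rw [show 2*k+1+1 = 2*(k+1) from by ring, hr2k (k+1), hr2k1 k]
      have hd1 : (0:ℝ) < (c₂:ℝ) * ((cheb X (k+1) : ℤ) : ℝ) :=
        mul_pos hc2R (hQpos (k+1) (by omega))
      have hd2 : (0:ℝ) < ((cheb X (k+1) : ℤ) : ℝ) + ((cheb X k : ℤ) : ℝ) :=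
        add_pos_of_pos_of_nonneg (hQpos (k+1) (by omega)) (hQ0 k)
      rw [div_lt_div_iff₀ hd1 hd2]
      have key : (cheb X (k+2) + cheb X (k+1)) * (cheb X (k+1) + cheb X k)
          < c₁ * cheb X (k+1) * (c₂ * cheb X (k+1)) := by
        rw [cheb_rec]
        nlinarith [cheb_inv X k, hcc]
      calc (((cheb X (k+1+1) : ℤ) : ℝ) + ((cheb X (k+1) : ℤ) : ℝ))
            * (((cheb X (k+1) : ℤ) : ℝ) + ((cheb X k : ℤ) : ℝ))
          = (((cheb X (k+2) + cheb X (k+1)) * (cheb X (k+1) + cheb X k) : ℤ) : ℝ) := by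
            push_cast; ring
        _ < ((c₁ * cheb X (k+1) * (c₂ * cheb X (k+1)) : ℤ) : ℝ) := by exact_mod_cast key
        _ = (c₁:ℝ) * ((cheb X (k+1) : ℤ) : ℝ) * ((c₂:ℝ) * ((cheb X (k+1) : ℤ) : ℝ)) := by
            push_cast; ring
  refine ⟨mono, ?_⟩
  -- limit part
  set S : ℝ := Real.sqrt ((c₁ : ℝ) ^ 2 * (c₂ : ℝ) ^ 2 - 4 * ((c₁ : ℝ) * c₂)) with hSdef
  have hccR : (c₁ : ℝ) * c₂ = (X : ℝ) + 2 := by exact_mod_cast hcc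
  have hXR : (2:ℝ) ≤ (X : ℝ) := by exact_mod_cast hX
  have hS0 : 0 ≤ S := Real.sqrt_nonneg _
  have hS2 : S^2 = ((X:ℝ))^2 - 4 := by
    rw [hSdef, Real.sq_sqrt (by nlinarith)]
    nlinarith [hccR]
  set lam : ℝ := (((X:ℝ)) + S) / 2 with hlamdef
  have hlam : lam^2 - (X:ℝ) * lam + 1 = 0 := by
    rw [hlamdef]; linear_combination hS2 / 4
  have hαlam : α = (lam + 1) / (c₂ : ℝ) := by
    rw [hαdef, hlamdef]
    field_simp
    linarith [hccR]
  have hmu : (X:ℝ) - lam ≤ 1 := by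
    have hSX : (X:ℝ) - 2 ≤ S := by nlinarith [hS0, hS2]
    rw [hlamdef]; linarith
  -- key bound for even indices
  have hbound : ∀ k : ℕ, 1 ≤ k → α ≤ r (2*k) ∧ r (2*k) ≤ α + 1 / (k:ℝ) := by
    intro k hk
    rw [hr2k k]
    set u : ℝ := ((cheb X (k+1) : ℤ) : ℝ) with hu
    set v : ℝ := ((cheb X k : ℤ) : ℝ) with hv
    have hkR : (1:ℝ) ≤ (k:ℝ) := by exact_mod_cast hk
    have hv1 : (k:ℝ) ≤ v := by rw [hv]; exact_mod_cast (hq k).1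
    have hvpos : (1:ℝ) ≤ v := le_trans hkR hv1
    have huv : v + 1 ≤ u := by rw [hu, hv]; exact_mod_cast (hq k).2
    have hinv : u^2 - (X:ℝ) * u * v + v^2 = 1 := by
      rw [hu, hv]; exact_mod_cast cheb_inv X k
    have hprod : (u - lam * v) * (u - ((X:ℝ) - lam) * v) = 1 := by
      linear_combination hinv - v^2 * hlam
    have h2f : 1 ≤ u - ((X:ℝ) - lam) * v := by nlinarith [mul_nonneg (by linarith : (0:ℝ) ≤ 1 - ((X:ℝ) - lam)) (by linarith : (0:ℝ) ≤ v)]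
    have hp : (0:ℝ) < u - ((X:ℝ) - lam) * v := by linarith
    have hwe : u - lam * v = 1 / (u - ((X:ℝ) - lam) * v) := by
      rw [eq_div_iff hp.ne']
      linarith [hprod]
    have hw1 : 0 < u - lam * v := by rw [hwe]; positivity
    have hw2 : u - lam * v ≤ 1 := by
      rw [hwe]
      rw [div_le_one hp]
      exact h2f
    have hdenpos : (0:ℝ) < (c₂:ℝ) * v := mul_pos hc2R (by linarith)
    have hreq : (u + v) / ((c₂:ℝ) * v) - α = (u - lam * v) / ((c₂:ℝ) * v) := by
      rw [hαlam]
      field_simp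
      ring
    constructor
    · have : 0 < (u - lam * v) / ((c₂:ℝ) * v) := div_pos hw1 hdenpos
      linarith [hreq]
    · have hc21 : (1:ℝ) ≤ (c₂:ℝ) := by exact_mod_cast h₂
      have hkc : (k:ℝ) ≤ (c₂:ℝ) * v := by
        have := mul_le_mul_of_nonneg_right hc21 (by linarith : (0:ℝ) ≤ v)
        linarith
      have : (u - lam * v) / ((c₂:ℝ) * v) ≤ 1 / (k:ℝ) :=
        div_le_div₀ (by norm_num) hw2 (by linarith) hkc
      linarith [hreq]
  -- squeeze bounds for all n ≥ 2
  have hub : ∀ n : ℕ, 2 ≤ n → α ≤ r n ∧ r n ≤ α + 4 / (n:ℝ) := by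
    intro n hn
    rcases Nat.even_or_odd n with ⟨k, hk⟩ | ⟨k, hk⟩
    · have hk' : n = 2*k := by omega
      have hk1 : 1 ≤ k := by omega
      subst hk'
      obtain ⟨hl, hr'⟩ := hbound k hk1
      refine ⟨hl, le_trans hr' ?_⟩
      have hkR : (1:ℝ) ≤ (k:ℝ) := by exact_mod_cast hk1
      have h1 : 1 / (k:ℝ) ≤ 4 / ((2*k : ℕ):ℝ) := by
        rw [div_le_div_iff₀ (by linarith) (by push_cast; linarith)]
        push_cast; linarith
      linarith
    · subst hk
      have hk1 : 1 ≤ k := by omega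
      have hkR : (1:ℝ) ≤ (k:ℝ) := by exact_mod_cast hk1
      constructor
      · have h1 : r (2*k+1+1) < r (2*k+1) := mono (2*k+1) (by omega)
        have h2 : α ≤ r (2*(k+1)) := (hbound (k+1) (by omega)).1
        rw [show 2*(k+1) = 2*k+1+1 from by ring] at h2
        linarith
      · have h1 : r (2*k+1) < r (2*k) := mono (2*k) (by omega)
        have h2 : r (2*k) ≤ α + 1/(k:ℝ) := (hbound k hk1).2
        have h3 : 1/(k:ℝ) ≤ 4 / ((2*k+1 : ℕ):ℝ) := by
          rw [div_le_div_iff₀ (by linarith) (by push_cast; linarith)]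
          push_cast; linarith
        linarith
  have hlim : Filter.Tendsto (fun n : ℕ => α + 4 / (n:ℝ)) Filter.atTop (nhds α) := by
    have h := tendsto_const_div_atTop_nhds_zero_nat (4:ℝ)
    simpa using Filter.Tendsto.add (tendsto_const_nhds (x := α)) h
  apply tendsto_of_tendsto_of_tendsto_of_le_of_le' (tendsto_const_nhds (x := α)) hlim
  · filter_upwards [Filter.eventually_ge_atTop 2] with n hn using (hub n hn).1
  · filter_upwards [Filter.eventually_ge_atTop 2] with n hn using (hub n hn).2
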